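/- Let V(α,β) be the module of intermediate series over the Virasoro algebra and suppose (V(α,β),δ) is a 1-differential module over (Vir, d_{n,a}) with δ ≠ −id. Then (n−1)α ∈ ℤ and there exists ξ ∈ ℂ such that δ(v_i) = ξa^i v_{(n−1)α+ni} − v_i for all i ∈ ℤ. -/

import Mathlib

/-- The defining bracket relations of the Virasoro algebra on a family `L : ℤ → V`
and a central element `C`. -/
def VirRel {V : Type*} [LieRing V] [LieAlgebra ℂ V] (L : ℤ → V) (C : V) : Prop :=
  (∀ m n : ℤ, ⁅L m, L n⁆ = ((n : ℂ) - (m : ℂ)) • L (m + n)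
      + (if m + n = 0 then ((m : ℂ) ^ 3 - (m : ℂ)) / 12 else 0) • C) ∧
  ∀ m : ℤ, ⁅C, L m⁆ = 0

/-- `f` has the values of `φ_n ∘ τ_a` on the basis:
`f(L_i) = (a^i/n)(L_{ni} - δ_{i,0}((n²-1)/24)C)` and `f(C) = nC`. -/
def PhiTau {V : Type*} [LieRing V] [LieAlgebra ℂ V] (L : ℤ → V) (C : V)
    (n : ℤ) (a : ℂ) (f : V →ₗ[ℂ] V) : Prop :=
  (∀ i : ℤ, f (L i) = (a ^ i / (n : ℂ)) •
      (L (n * i) - (if i = 0 then ((n : ℂ) ^ 2 - 1) / 24 else 0) • C)) ∧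
  f C = (n : ℂ) • C


/-- any 1-differential module structure `δ ≠ -id` on the module
`V(α,β)` of intermediate series over `(Vir, d_{n,a})` satisfies `(n-1)α ∈ ℤ` and
`δ(v_i) = ξ a^i v_{(n-1)α+ni} - v_i` for some `ξ ∈ ℂ`. -/
theorem stmt_14 {V : Type*} [LieRing V] [LieAlgebra ℂ V]
    (L : ℤ → V) (C : V)
    (b : Module.Basis (Option ℤ) ℂ V) (hbL : ∀ i : ℤ, b (some i) = L i) (hbC : b none = C)
    (hrel : VirRel L C)
    {M : Type*} [AddCommGroup M] [Module ℂ M] [LieRingModule V M] [LieModule ℂ V M]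
    (α β : ℂ) (v : ℤ → M)
    (bv : Module.Basis ℤ ℂ M) (hbv : ∀ i : ℤ, bv i = v i)
    (hact : ∀ i j : ℤ, ⁅L i, v j⁆ = (α + (j : ℂ) + β * (i : ℂ)) • v (i + j))
    (hactC : ∀ m : M, ⁅C, m⁆ = 0)
    (n : ℤ) (hn : n ≠ 0) (a : ℂ) (ha : a ≠ 0)
    (f : V →ₗ[ℂ] V) (hf : PhiTau L C n a f)
    (δ : M →ₗ[ℂ] M) (hδ : δ ≠ -(LinearMap.id : M →ₗ[ℂ] M))
    (hdm : ∀ (x : V) (m : M),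
      δ ⁅x, m⁆ = ⁅f x - x, m⁆ + ⁅x, δ m⁆ + ⁅f x - x, δ m⁆) :
    ∃ k : ℤ, ((n : ℂ) - 1) * α = (k : ℂ) ∧
      ∃ ξ : ℂ, ∀ i : ℤ, δ (v i) = (ξ * a ^ i) • v (k + n * i) - v i := by

  obtain ⟨hfL, hfC⟩ := hf
  have hnc : (n : ℂ) ≠ 0 := Int.cast_ne_zero.mpr hn
  -- the map D = δ + id intertwines the f-twisted action
  have hDkey : ∀ (x : V) (m : M), δ ⁅x, m⁆ + ⁅x, m⁆ = ⁅f x, δ m + m⁆ := by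
    intro x m
    rw [hdm, sub_lie, sub_lie, lie_add]
    abel
  -- coordinates of brackets
  have hrep : ∀ (i : ℤ) (m : M) (k : ℤ),
      bv.repr ⁅L i, m⁆ (i + k) = (α + (k : ℂ) + β * (i : ℂ)) * bv.repr m k := by
    intro i m k
    have h1 : (Finsupp.lapply (i + k) : (ℤ →₀ ℂ) →ₗ[ℂ] ℂ).comp
        (bv.repr.toLinearMap.comp ((LieModule.toEnd ℂ V M (L i) : M →ₗ[ℂ] M)))
        = (α + (k : ℂ) + β * (i : ℂ)) •
          ((Finsupp.lapply k : (ℤ →₀ ℂ) →ₗ[ℂ] ℂ).comp bv.repr.toLinearMap) := by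
      apply bv.ext
      intro j
      have hact' : ⁅L i, bv j⁆ = (α + (j : ℂ) + β * (i : ℂ)) • bv (i + j) := by
        rw [hbv, hbv]; exact hact i j
      simp only [LinearMap.comp_apply, LinearMap.smul_apply, LieModule.toEnd_apply_apply,
        LinearEquiv.coe_coe, Finsupp.lapply_apply, smul_eq_mul, hact', map_smul,
        Module.Basis.repr_self, Finsupp.smul_apply, Finsupp.single_apply]
      by_cases h : j = k
      · subst h; simp
      · have h2 : ¬ (i + j = i + k) := by omega
        simp [h, h2]
    have h2 := LinearMap.congr_fun h1 m
    simpa using h2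
  -- Step 1: diagonality relation
  have step1 : ∀ j k : ℤ, (α + (k : ℂ) - (n : ℂ) * (α + (j : ℂ))) *
      bv.repr (δ (v j) + v j) k = 0 := by
    intro j k
    have h0 : ⁅L 0, v j⁆ = (α + (j : ℂ)) • v j := by simpa using hact 0 j
    have hkey := hDkey (L 0) (v j)
    rw [h0, map_smul, ← smul_add] at hkey
    set w := δ (v j) + v j with hwdef
    have hbr : ⁅f (L 0), w⁆ = ((n : ℂ))⁻¹ • ⁅L 0, w⁆ := by
      rw [hfL 0]
      simp [smul_lie, sub_lie, hactC, smul_smul, one_div]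
    rw [hbr] at hkey
    have hbr2 : ⁅L 0, w⁆ = ((n : ℂ) * (α + (j : ℂ))) • w := by
      calc ⁅L 0, w⁆ = (n : ℂ) • (((n : ℂ))⁻¹ • ⁅L 0, w⁆) := by
            rw [smul_smul, mul_inv_cancel₀ hnc, one_smul]
        _ = (n : ℂ) • ((α + (j : ℂ)) • w) := by rw [← hkey]
        _ = _ := by rw [smul_smul]
    have h3 := congrArg (fun m => bv.repr m k) hbr2
    simp only [map_smul, Finsupp.smul_apply, smul_eq_mul] at h3
    have h4 := hrep 0 w k
    simp only [Int.cast_zero, mul_zero, add_zero, zero_add] at h4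
    rw [h4] at h3
    linear_combination h3
  -- Step 2: find the integer K = (n-1)α
  have hex : ∃ j₀ : ℤ, δ (v j₀) + v j₀ ≠ 0 := by
    by_contra h
    push_neg at h
    refine hδ (bv.ext fun i => ?_)
    rw [hbv]
    have h2 := eq_neg_of_add_eq_zero_left (h i)
    simpa using h2
  obtain ⟨j₀, hj₀⟩ := hex
  have hex2 : ∃ k₀ : ℤ, bv.repr (δ (v j₀) + v j₀) k₀ ≠ 0 := by
    by_contra h
    push_neg at h
    apply hj₀
    have h2 : bv.repr (δ (v j₀) + v j₀) = 0 := Finsupp.ext h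
    simpa using congrArg bv.repr.symm h2
  obtain ⟨k₀, hk₀⟩ := hex2
  have heig : α + (k₀ : ℂ) - (n : ℂ) * (α + (j₀ : ℂ)) = 0 := by
    by_contra h
    exact hk₀ ((mul_eq_zero.mp (step1 j₀ k₀)).resolve_left h)
  have hK : ((n : ℂ) - 1) * α = ((k₀ - n * j₀ : ℤ) : ℂ) := by
    push_cast
    linear_combination -heig
  refine ⟨k₀ - n * j₀, hK, ?_⟩
  set K : ℤ := k₀ - n * j₀ with hKdef
  -- Step 2b: D(v j) is a multiple of v (K + n j)
  set e : ℤ → ℂ := fun j => bv.repr (δ (v j) + v j) (K + n * j) with he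
  have step2 : ∀ j : ℤ, δ (v j) + v j = e j • v (K + n * j) := by
    intro j
    apply bv.repr.injective
    ext k
    rw [show v (K + n * j) = bv (K + n * j) from (hbv _).symm,
      map_smul, Finsupp.smul_apply, Module.Basis.repr_self, Finsupp.single_apply]
    by_cases hk : K + n * j = k
    · subst hk; simp [he]
    · simp only [hk, if_false, smul_eq_mul, mul_zero]
      have hne : (α + (k : ℂ) - (n : ℂ) * (α + (j : ℂ))) ≠ 0 := by
        have hcast : α + (k : ℂ) - (n : ℂ) * (α + (j : ℂ)) = ((k - (K + n * j) : ℤ) : ℂ) := by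
          push_cast
          linear_combination -hK
        rw [hcast, Int.cast_ne_zero]
        omega
      exact (mul_eq_zero.mp (step1 j k)).resolve_left hne
  -- Step 3: the recursion relation
  have R : ∀ (m j : ℤ), m ≠ 0 →
      (α + (j : ℂ) + β * (m : ℂ)) * (e (j + m) - a ^ m * e j) = 0 := by
    intro m j hm
    have hflm : f (L m) = (a ^ m / (n : ℂ)) • L (n * m) := by
      rw [hfL m]
      simp [hm]
    have hvne : v (K + n * (m + j)) ≠ 0 := by
      rw [show v (K + n * (m + j)) = bv (K + n * (m + j)) from (hbv _).symm]
      exact bv.ne_zero _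
    have h1 : ((α + (j : ℂ) + β * (m : ℂ)) * e (m + j)) • v (K + n * (m + j))
        = (a ^ m / (n : ℂ) * (e j *
            (α + ((K + n * j : ℤ) : ℂ) + β * ((n * m : ℤ) : ℂ)))) • v (K + n * (m + j)) := by
      calc ((α + (j : ℂ) + β * (m : ℂ)) * e (m + j)) • v (K + n * (m + j))
          = (α + (j : ℂ) + β * (m : ℂ)) • (e (m + j) • v (K + n * (m + j))) := by
            rw [smul_smul]
        _ = (α + (j : ℂ) + β * (m : ℂ)) • (δ (v (m + j)) + v (m + j)) := by
            rw [step2 (m + j)]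
        _ = δ ((α + (j : ℂ) + β * (m : ℂ)) • v (m + j))
              + (α + (j : ℂ) + β * (m : ℂ)) • v (m + j) := by
            rw [map_smul, smul_add]
        _ = δ ⁅L m, v j⁆ + ⁅L m, v j⁆ := by rw [hact m j]
        _ = ⁅f (L m), δ (v j) + v j⁆ := hDkey _ _
        _ = ⁅(a ^ m / (n : ℂ)) • L (n * m), e j • v (K + n * j)⁆ := by
            rw [hflm, step2 j]
        _ = (a ^ m / (n : ℂ)) • (e j • ⁅L (n * m), v (K + n * j)⁆) := by
            rw [smul_lie, lie_smul]
        _ = (a ^ m / (n : ℂ)) • (e j •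
              ((α + ((K + n * j : ℤ) : ℂ) + β * ((n * m : ℤ) : ℂ)) • v (n * m + (K + n * j)))) := by
            rw [hact (n * m) (K + n * j)]
        _ = _ := by
            rw [show n * m + (K + n * j) = K + n * (m + j) from by ring,
              smul_smul, smul_smul, mul_assoc]
    have h2 : (α + (j : ℂ) + β * (m : ℂ)) * e (m + j)
        = a ^ m / (n : ℂ) * (e j * (α + ((K + n * j : ℤ) : ℂ) + β * ((n * m : ℤ) : ℂ))) := by
      have h3 : ((α + (j : ℂ) + β * (m : ℂ)) * e (m + j)
          - a ^ m / (n : ℂ) * (e j * (α + ((K + n * j : ℤ) : ℂ) + β * ((n * m : ℤ) : ℂ))))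
          • v (K + n * (m + j)) = 0 := by
        rw [sub_smul, h1, sub_self]
      have h4 := (smul_eq_zero.mp h3).resolve_right hvne
      exact sub_eq_zero.mp h4
    have hs_n : (n : ℂ) * (a ^ m / (n : ℂ)) = a ^ m := mul_div_cancel₀ _ hnc
    have hmj : m + j = j + m := by ring
    rw [hmj] at h2
    have h5 : (n : ℂ) * ((α + (j : ℂ) + β * (m : ℂ)) * (e (j + m) - a ^ m * e j)) = 0 := by
      push_cast at h2
      push_cast at hK
      linear_combination (n : ℂ) * h2
        + (e j * (α + ((K : ℂ) + (n : ℂ) * (j : ℂ)) + β * ((n : ℂ) * (m : ℂ)))) * hs_n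
        - (a ^ m * e j) * hK
    rcases mul_eq_zero.mp h5 with h | h
    · exact absurd h hnc
    · exact h
  -- Step 4: e (j+1) = a * e j
  have ha2 : a ^ (2 : ℤ) = a * a := by
    rw [show (2 : ℤ) = 1 + 1 from by norm_num, zpow_add₀ ha, zpow_one]
  have hstep : ∀ j : ℤ, e (j + 1) = a * e j := by
    intro j
    by_cases h1 : α + (j : ℂ) + β = 0
    · by_cases hβ : β = 0
      · have r1 := R 1 (j - 1) one_ne_zero
        have r2 := R 2 (j - 1) two_ne_zero
        rw [show j - 1 + 1 = j from by ring] at r1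
        rw [show j - 1 + 2 = j + 1 from by ring] at r2
        have hc1 : α + ((j - 1 : ℤ) : ℂ) + β * ((1 : ℤ) : ℂ) = -1 := by
          push_cast
          rw [hβ] at h1 ⊢
          linear_combination h1
        have hc2 : α + ((j - 1 : ℤ) : ℂ) + β * ((2 : ℤ) : ℂ) = -1 := by
          push_cast
          rw [hβ] at h1 ⊢
          linear_combination h1
        rw [hc1] at r1
        rw [hc2] at r2
        have e1 : e j = a ^ (1 : ℤ) * e (j - 1) := by
          have h3 := (mul_eq_zero.mp r1).resolve_left (by norm_num)
          linear_combination h3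
        have e2 : e (j + 1) = a ^ (2 : ℤ) * e (j - 1) := by
          have h3 := (mul_eq_zero.mp r2).resolve_left (by norm_num)
          linear_combination h3
        rw [e1, e2, ha2, zpow_one]
        ring
      · have r1 := R 1 (j + 1) one_ne_zero
        have r2 := R 2 j two_ne_zero
        rw [show j + 1 + 1 = j + 2 from by ring] at r1
        have hc1 : α + ((j + 1 : ℤ) : ℂ) + β * ((1 : ℤ) : ℂ) = 1 := by
          push_cast
          linear_combination h1
        have hc2 : α + (j : ℂ) + β * ((2 : ℤ) : ℂ) = β := by
          push_cast
          linear_combination h1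
        rw [hc1] at r1
        rw [hc2] at r2
        have e1 : e (j + 2) = a ^ (1 : ℤ) * e (j + 1) := by
          have h3 := (mul_eq_zero.mp r1).resolve_left (by norm_num)
          linear_combination h3
        have e2 : e (j + 2) = a ^ (2 : ℤ) * e j := by
          have h3 := (mul_eq_zero.mp r2).resolve_left hβ
          linear_combination h3
        have h4 : a * e (j + 1) = a * (a * e j) := by
          rw [← zpow_one a, ← e1, e2, ha2, zpow_one]
          ring
        exact mul_left_cancel₀ ha h4
    · have r1 := R 1 j one_ne_zero
      have hc : α + (j : ℂ) + β * ((1 : ℤ) : ℂ) = α + (j : ℂ) + β := by push_cast; ring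
      rw [hc] at r1
      have h3 := (mul_eq_zero.mp r1).resolve_left h1
      have h4 := sub_eq_zero.mp h3
      rw [h4, zpow_one]
  -- Step 5: e i = e 0 * a ^ i
  have hfinal : ∀ i : ℤ, e i = e 0 * a ^ i := by
    intro i
    induction i using Int.induction_on with
    | zero => simp
    | succ i ih =>
      rw [hstep, ih, zpow_add₀ ha, zpow_one]
      ring
    | pred i ih =>
      have h := hstep (-(i : ℤ) - 1)
      rw [show -(i : ℤ) - 1 + 1 = -(i : ℤ) from by ring, ih] at h
      have h2 : a * e (-(i : ℤ) - 1) = a * (e 0 * a ^ (-(i : ℤ) - 1)) := by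
        rw [← h, zpow_sub₀ ha, zpow_one]
        field_simp
      exact mul_left_cancel₀ ha h2
  refine ⟨e 0, fun i => ?_⟩
  have h := step2 i
  rw [hfinal i] at h
  rw [eq_sub_iff_add_eq]
  exact h
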